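/- Let p be a prime and let X be the group of all p-tuples (a_1,…,a_p) of complex roots of unity of p-power order with a_1·a_2·⋯·a_p = 1 (under componentwise multiplication), equipped with the cyclic shift action of the p-cycle s = (1,2,…,p). Then X is a uniserial ⟨s⟩-module: for every integer j ≥ 0 there is exactly one shift-invariant subgroup of X of order p^j, every finite shift-invariant subgroup of X has order p^j for some j ≥ 0, and consequently the finite shift-invariant subgroups of X form a chain under inclusion. -/

import Mathlib

/-- Membership in the group `X` of `p`-tuples of complex roots of unity of `p`-power
order whose product is `1`. -/
def MemXGroup (p : ℕ) (a : Fin p → ℂˣ) : Prop :=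
  (∀ i, ∃ k : ℕ, a i ^ (p ^ k) = 1) ∧ (∏ i, a i) = 1

/-- A subgroup `B` of the ambient group of tuples is invariant under the cyclic
shift induced by the `p`-cycle `s = (1,2,…,p)`. -/
def ShiftInvariant (p : ℕ) (B : Subgroup (Fin p → ℂˣ)) : Prop :=
  ∀ a ∈ B, (fun i => a (finRotate p i)) ∈ B

namespace PPowAux

variable (p : ℕ)

lemma pow_ppow_mono {p : ℕ} {z : ℂˣ} {k K : ℕ} (h : z ^ p ^ k = 1) (hkK : k ≤ K) :
    z ^ p ^ K = 1 := by
  have hK : p ^ K = p ^ k * p ^ (K - k) := by rw [← pow_add, Nat.add_sub_cancel' hkK]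
  rw [hK, pow_mul, h, one_pow]

/-- The subgroup of `ℂˣ` of `p`-power roots of unity. -/
def pTors : Subgroup ℂˣ where
  carrier := {z | ∃ k, z ^ p ^ k = 1}
  one_mem' := ⟨0, one_pow _⟩
  mul_mem' := by
    rintro z w ⟨k, hk⟩ ⟨l, hl⟩
    exact ⟨max k l, by
      rw [mul_pow, pow_ppow_mono hk (le_max_left k l), pow_ppow_mono hl (le_max_right k l),
        one_mul]⟩
  inv_mem' := by
    rintro z ⟨k, hk⟩
    exact ⟨k, by rw [inv_pow, hk, inv_one]⟩

/-- The shift map. -/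
def shiftFun (a : Fin p → ℂˣ) : Fin p → ℂˣ := fun i => a (finRotate p i)

/-- The subgroup `X`. -/
def XP : Subgroup (Fin p → ℂˣ) where
  carrier := {a | (∀ i, a i ∈ pTors p) ∧ (∏ i, a i) = 1}
  one_mem' := ⟨fun _ => (pTors p).one_mem, by simp⟩
  mul_mem' := by
    rintro a b ⟨ha1, ha2⟩ ⟨hb1, hb2⟩
    refine ⟨fun i => (pTors p).mul_mem (ha1 i) (hb1 i), ?_⟩
    simp only [Pi.mul_apply]
    rw [Finset.prod_mul_distrib, ha2, hb2, one_mul]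
  inv_mem' := by
    rintro a ⟨ha1, ha2⟩
    refine ⟨fun i => (pTors p).inv_mem (ha1 i), ?_⟩
    simp only [Pi.inv_apply]
    rw [Finset.prod_inv_distrib, ha2, inv_one]

lemma mem_XP_iff {a : Fin p → ℂˣ} : a ∈ XP p ↔ MemXGroup p a := Iff.rfl

/-- The homomorphism `D a = (shift a) * a⁻¹`. -/
def Dm : (Fin p → ℂˣ) →* (Fin p → ℂˣ) where
  toFun a := fun i => a (finRotate p i) * (a i)⁻¹
  map_one' := by funext i; simp
  map_mul' a b := by
    funext i
    simp only [Pi.mul_apply, mul_inv]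
    exact mul_mul_mul_comm _ _ _ _

lemma Dm_apply (a : Fin p → ℂˣ) : Dm p a = shiftFun p a * a⁻¹ := rfl

lemma shift_mem_XP {a : Fin p → ℂˣ} (ha : a ∈ XP p) : shiftFun p a ∈ XP p := by
  refine ⟨fun i => ha.1 _, ?_⟩
  show (∏ i, a (finRotate p i)) = 1
  rw [Equiv.prod_comp (finRotate p) a]
  exact ha.2

lemma Dm_mem_XP {a : Fin p → ℂˣ} (ha : a ∈ XP p) : Dm p a ∈ XP p := by
  rw [Dm_apply]
  exact (XP p).mul_mem (shift_mem_XP p ha) ((XP p).inv_mem ha)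

lemma Dm_iter_mem_XP {a : Fin p → ℂˣ} (ha : a ∈ XP p) (k : ℕ) :
    (⇑(Dm p))^[k] a ∈ XP p := by
  induction k with
  | zero => exact ha
  | succ k ih => rw [Function.iterate_succ_apply']; exact Dm_mem_XP p ih

lemma Dm_shift (a : Fin p → ℂˣ) : Dm p (shiftFun p a) = shiftFun p (Dm p a) := rfl

lemma Dm_iter_shift (k : ℕ) (a : Fin p → ℂˣ) :
    (⇑(Dm p))^[k] (shiftFun p a) = shiftFun p ((⇑(Dm p))^[k] a) := by
  induction k generalizing a with
  | zero => rfl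
  | succ k ih => rw [Function.iterate_succ_apply, Function.iterate_succ_apply, Dm_shift, ih]

/-- The canonical shift-invariant subgroup of order `p^j`. -/
def Bsub (j : ℕ) : Subgroup (Fin p → ℂˣ) where
  carrier := {a | a ∈ XP p ∧ (⇑(Dm p))^[j] a = 1}
  one_mem' := ⟨(XP p).one_mem, iterate_map_one (Dm p) j⟩
  mul_mem' := by
    rintro a b ⟨haX, haD⟩ ⟨hbX, hbD⟩
    exact ⟨(XP p).mul_mem haX hbX, by rw [iterate_map_mul, haD, hbD, mul_one]⟩
  inv_mem' := by
    rintro a ⟨haX, haD⟩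
    exact ⟨(XP p).inv_mem haX, by rw [iterate_map_inv, haD, inv_one]⟩

lemma mem_Bsub {j : ℕ} {a : Fin p → ℂˣ} :
    a ∈ Bsub p j ↔ a ∈ XP p ∧ (⇑(Dm p))^[j] a = 1 := Iff.rfl

lemma Bsub_le_XP (j : ℕ) : Bsub p j ≤ XP p := fun _ h => h.1

lemma Bsub_zero : Bsub p 0 = ⊥ := by
  ext a
  simp only [mem_Bsub, Function.iterate_zero, id_eq, Subgroup.mem_bot]
  exact ⟨fun h => h.2, by rintro rfl; exact ⟨(XP p).one_mem, rfl⟩⟩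

lemma Bsub_mono {j j' : ℕ} (h : j ≤ j') : Bsub p j ≤ Bsub p j' := by
  rintro a ⟨haX, haD⟩
  refine ⟨haX, ?_⟩
  rw [← Nat.sub_add_cancel h, Function.iterate_add_apply, haD, iterate_map_one]

lemma shiftInvariant_Bsub (j : ℕ) : ShiftInvariant p (Bsub p j) := by
  rintro a ⟨haX, haD⟩
  refine ⟨shift_mem_XP p haX, ?_⟩
  show (⇑(Dm p))^[j] (shiftFun p a) = 1
  rw [Dm_iter_shift, haD]
  rfl

end PPowAux
namespace PPowAux

variable (p : ℕ)

lemma const_of_rot {n : ℕ} {a : Fin (n + 1) → ℂˣ}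
    (h : ∀ i, a (finRotate (n + 1) i) = a i) (i : Fin (n + 1)) : a i = a 0 := by
  have key : ∀ v (hv : v < n + 1), a ⟨v, hv⟩ = a 0 := by
    intro v
    induction v with
    | zero =>
      intro hv
      have h0 : (⟨0, hv⟩ : Fin (n + 1)) = 0 := by ext; simp
      rw [h0]
    | succ v ih =>
      intro hv
      have hv' : v < n + 1 := Nat.lt_of_succ_lt hv
      have hne : (⟨v, hv'⟩ : Fin (n + 1)) ≠ Fin.last n := by
        intro hE
        have := congrArg Fin.val hE
        simp only [Fin.last] at this
        omega
      have hrot : finRotate (n + 1) ⟨v, hv'⟩ = ⟨v + 1, hv⟩ := by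
        ext
        rw [coe_finRotate_of_ne_last hne]
      calc a ⟨v + 1, hv⟩ = a (finRotate (n + 1) ⟨v, hv'⟩) := by rw [hrot]
        _ = a ⟨v, hv'⟩ := h _
        _ = a 0 := ih hv'
  have := key i.1 i.2
  rwa [Fin.eta] at this

lemma const_of_Dm_eq_one {n : ℕ} {a : Fin (n + 1) → ℂˣ} (h : Dm (n + 1) a = 1)
    (i : Fin (n + 1)) : a i = a 0 := by
  refine const_of_rot ?_ i
  intro i
  have := congrFun h i
  simp only [Dm, MonoidHom.coe_mk, OneHom.coe_mk, Pi.one_apply] at this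
  exact mul_inv_eq_one.mp this

lemma card_Bsub_one (hp : p.Prime) : Nat.card (Bsub p 1) = p := by
  haveI : NeZero p := ⟨hp.ne_zero⟩
  obtain ⟨n, rfl⟩ : ∃ n, p = n + 1 := Nat.exists_eq_succ_of_ne_zero hp.ne_zero
  set q := n + 1
  have e : ↥(Bsub q 1) ≃ ↥(rootsOfUnity q ℂ) := by
    refine ⟨fun x => ⟨(x : Fin q → ℂˣ) 0, ?_⟩, fun z => ⟨fun _ => (z : ℂˣ), ⟨?_, ?_⟩⟩, ?_, ?_⟩
    · rw [mem_rootsOfUnity]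
      have hD : Dm q (x : Fin q → ℂˣ) = 1 := by
        have := x.2.2
        rwa [Function.iterate_one] at this
      have hc : ∀ i, (x : Fin q → ℂˣ) i = (x : Fin q → ℂˣ) 0 :=
        fun i => const_of_Dm_eq_one hD i
      have hprod := x.2.1.2
      calc ((x : Fin q → ℂˣ) 0) ^ q = ∏ _i : Fin q, (x : Fin q → ℂˣ) 0 := by
            rw [Finset.prod_const, Finset.card_univ, Fintype.card_fin]
        _ = ∏ i, (x : Fin q → ℂˣ) i := (Finset.prod_congr rfl fun i _ => (hc i).symm)
        _ = 1 := hprod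
    · constructor
      · intro i
        exact ⟨1, by rw [pow_one]; exact (mem_rootsOfUnity q _).mp z.2⟩
      · rw [Finset.prod_const, Finset.card_univ, Fintype.card_fin]
        exact (mem_rootsOfUnity q _).mp z.2
    · rw [Function.iterate_one]
      funext i
      exact mul_inv_cancel _
    · intro x
      refine Subtype.ext (funext fun i => ?_)
      exact (const_of_Dm_eq_one (by have := x.2.2; rwa [Function.iterate_one] at this) i).symm
    · intro z
      rfl
  rw [Nat.card_congr e, Complex.card_rootsOfUnity q]

end PPowAux
namespace PPowAux

variable (p : ℕ)

open Fin.NatCast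

lemma exists_exponent {a : Fin p → ℂˣ} (ha : a ∈ XP p) :
    ∃ K, ∀ i, a i ^ p ^ K = 1 := by
  choose k hk using ha.1
  refine ⟨Finset.univ.sup k, fun i => ?_⟩
  exact pow_ppow_mono (hk i) (Finset.le_sup (Finset.mem_univ i))

lemma exists_Dm_eq (hp : p.Prime) {b : Fin p → ℂˣ} (hb : b ∈ XP p) :
    ∃ a ∈ XP p, Dm p a = b := by
  haveI : NeZero p := ⟨hp.ne_zero⟩
  obtain ⟨n, rfl⟩ : ∃ n, p = n + 1 := Nat.exists_eq_succ_of_ne_zero hp.ne_zero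
  set g : Fin (n + 1) → ℂˣ := fun i => ∏ k ∈ Finset.range i.val, b (k : Fin (n + 1)) with hg
  have hprod_all : ∏ k ∈ Finset.range (n + 1), b (k : Fin (n + 1)) = 1 := by
    rw [← Fin.prod_univ_eq_prod_range (fun k => b (k : Fin (n + 1))) (n + 1)]
    simpa using hb.2
  set C : ℂˣ := ∏ i, g i with hC
  obtain ⟨z, hz⟩ := IsAlgClosed.exists_pow_nat_eq (k := ℂ) ((C⁻¹ : ℂˣ) : ℂ) (n := n + 1)
    (Nat.succ_pos n)
  have hz0 : z ≠ 0 := by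
    intro h
    rw [h, zero_pow (by omega : n + 1 ≠ 0)] at hz
    exact (Units.ne_zero _) hz.symm
  set t : ℂˣ := Units.mk0 z hz0 with hT
  have ht : t ^ (n + 1) = C⁻¹ := by
    ext
    rw [Units.val_pow_eq_pow_val]
    exact hz
  have hgmem : ∀ i, g i ∈ pTors (n + 1) := fun i =>
    Subgroup.prod_mem _ fun k _ => hb.1 _
  have hCmem : C ∈ pTors (n + 1) := Subgroup.prod_mem _ fun i _ => hgmem i
  have htmem : t ∈ pTors (n + 1) := by
    obtain ⟨K, hK⟩ := (pTors (n + 1)).inv_mem hCmem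
    refine ⟨K + 1, ?_⟩
    rw [pow_succ' (n + 1) K, pow_mul, ht, hK]
  refine ⟨fun i => t * g i, ⟨fun i => (pTors (n + 1)).mul_mem htmem (hgmem i), ?_⟩, ?_⟩
  · rw [Finset.prod_mul_distrib, Finset.prod_const, Finset.card_univ, Fintype.card_fin,
      ht, ← hC, inv_mul_cancel]
  · funext i
    show (t * g (finRotate (n + 1) i)) * (t * g i)⁻¹ = b i
    have hstep : g (finRotate (n + 1) i) = b i * g i := by
      by_cases hi : i = Fin.last n
      · subst hi
        rw [finRotate_last]
        have hg0 : g 0 = 1 := by simp [hg]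
        have hglast : g (Fin.last n) = ∏ k ∈ Finset.range n, b (k : Fin (n + 1)) := rfl
        have hbn : b ((n : ℕ) : Fin (n + 1)) = b (Fin.last n) := by
          congr 1
          ext
          simp [Fin.val_cast_of_lt (Nat.lt_succ_self n)]
        rw [hg0, hglast, ← hbn, mul_comm, ← Finset.prod_range_succ, hprod_all]
      · have hval : (finRotate (n + 1) i).val = i.val + 1 := coe_finRotate_of_ne_last hi
        have h1 : g (finRotate (n + 1) i)
            = ∏ k ∈ Finset.range ((finRotate (n + 1) i).val), b (k : Fin (n + 1)) := rfl
        rw [h1, hval, Finset.prod_range_succ, Fin.cast_val_eq_self, mul_comm]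
    rw [hstep, mul_inv, mul_mul_mul_comm, mul_inv_cancel, one_mul, mul_assoc,
      mul_inv_cancel, mul_one]

lemma exists_mem_Bsub_succ (hp : p.Prime) {j : ℕ} {b : Fin p → ℂˣ} (hb : b ∈ Bsub p j) :
    ∃ a ∈ Bsub p (j + 1), Dm p a = b := by
  obtain ⟨a, haX, haD⟩ := exists_Dm_eq p hp hb.1
  exact ⟨a, ⟨haX, by rw [Function.iterate_succ_apply, haD, hb.2]⟩, haD⟩

lemma card_Bsub (hp : p.Prime) (j : ℕ) : Nat.card (Bsub p j) = p ^ j := by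
  induction j with
  | zero => rw [Bsub_zero, pow_zero]; exact Subgroup.card_bot
  | succ j ih =>
    have hle : Bsub p 1 ≤ Bsub p (j + 1) := Bsub_mono p (by omega)
    let f : ↥(Bsub p (j + 1)) →* ↥(Bsub p j) :=
      { toFun := fun x => ⟨Dm p x, (Dm_mem_XP p x.2.1),
          by rw [← Function.iterate_succ_apply]; exact x.2.2⟩
        map_one' := by
          ext
          simp
        map_mul' := fun x y => by
          ext
          simp }
    have hfsurj : Function.Surjective f := by
      rintro ⟨b, hb⟩
      obtain ⟨a, ha, haD⟩ := exists_mem_Bsub_succ p hp hb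
      exact ⟨⟨a, ha⟩, Subtype.ext haD⟩
    have hker : f.ker = (Bsub p 1).subgroupOf (Bsub p (j + 1)) := by
      ext x
      simp only [MonoidHom.mem_ker, Subgroup.mem_subgroupOf]
      constructor
      · intro h
        have hD : Dm p (x : Fin p → ℂˣ) = 1 := congrArg Subtype.val h
        exact ⟨x.2.1, by rw [Function.iterate_one]; exact hD⟩
      · intro h
        refine Subtype.ext ?_
        have := h.2
        rw [Function.iterate_one] at this
        exact this
    have hcard := Subgroup.card_eq_card_quotient_mul_card_subgroup f.ker
    have hquot : Nat.card (↥(Bsub p (j + 1)) ⧸ f.ker) = Nat.card (Bsub p j) :=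
      Nat.card_congr (QuotientGroup.quotientKerEquivOfSurjective f hfsurj).toEquiv
    have hkcard : Nat.card f.ker = p := by
      rw [hker]
      rw [Nat.card_congr (Subgroup.subgroupOfEquivOfLe hle).toEquiv]
      exact card_Bsub_one p hp
    rw [hcard, hquot, hkcard, ih, pow_succ]

lemma finite_Bsub (hp : p.Prime) (j : ℕ) : Finite ↥(Bsub p j) :=
  Nat.finite_of_card_ne_zero (by rw [card_Bsub p hp j]; exact pow_ne_zero j hp.ne_zero)

end PPowAux
namespace PPowAux

variable (p : ℕ)

open Fin.NatCast Fin.CommRing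

lemma shiftFun_iterate_apply {n : ℕ} (k : ℕ) (a : Fin (n + 1) → ℂˣ) (i : Fin (n + 1)) :
    ((shiftFun (n + 1))^[k] a) i = a (i + (k : Fin (n + 1))) := by
  induction k generalizing a with
  | zero => simp
  | succ k ih =>
    rw [Function.iterate_succ_apply, ih (shiftFun (n + 1) a)]
    show a (finRotate (n + 1) (i + (k : Fin (n + 1)))) = a (i + ((k + 1 : ℕ) : Fin (n + 1)))
    rw [finRotate_succ_apply]
    congr 1
    push_cast
    ring

lemma shiftFun_iterate_p (hp : 0 < p) (a : Fin p → ℂˣ) : (shiftFun p)^[p] a = a := by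
  obtain ⟨n, rfl⟩ : ∃ n, p = n + 1 := Nat.exists_eq_succ_of_ne_zero (by omega)
  funext i
  rw [shiftFun_iterate_apply, Fin.natCast_self, add_zero]

lemma shiftFun_iterate_mod (hp : 0 < p) (k : ℕ) (a : Fin p → ℂˣ) :
    (shiftFun p)^[k] a = (shiftFun p)^[k % p] a := by
  conv_lhs => rw [← Nat.mod_add_div k p]
  rw [Function.iterate_add_apply, Function.iterate_mul]
  congr 1
  exact Function.iterate_fixed (shiftFun_iterate_p p hp a) _

lemma Dm_iter_mem (B : Subgroup (Fin p → ℂˣ)) (hs : ShiftInvariant p B)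
    {a : Fin p → ℂˣ} (ha : a ∈ B) (k : ℕ) : (⇑(Dm p))^[k] a ∈ B := by
  induction k with
  | zero => exact ha
  | succ k ih =>
    rw [Function.iterate_succ_apply']
    exact B.mul_mem (hs _ ih) (B.inv_mem ih)

lemma exists_fixed_ne_one (hp : p.Prime) (B : Subgroup (Fin p → ℂˣ)) (hX : B ≤ XP p)
    (hs : ShiftInvariant p B) (hfin : Finite ↥B) (hne : B ≠ ⊥) :
    ∃ a ∈ B, a ≠ 1 ∧ shiftFun p a = a := by
  haveI : Fact p.Prime := ⟨hp⟩
  haveI : NeZero p := ⟨hp.ne_zero⟩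
  haveI := hfin
  by_contra hcon
  push_neg at hcon
  have hiter : ∀ (k : ℕ) (c : Fin p → ℂˣ), c ∈ B → (shiftFun p)^[k] c ∈ B := by
    intro k
    induction k with
    | zero => intro c hc; exact hc
    | succ k ih =>
      intro c hc
      rw [Function.iterate_succ_apply]
      exact ih _ (hs c hc)
  letI : MulAction (Multiplicative (ZMod p)) ↥B :=
    { smul := fun x a => ⟨(shiftFun p)^[x.toAdd.val] ↑a, hiter _ _ a.2⟩
      one_smul := fun a => by
        apply Subtype.ext
        show (shiftFun p)^[((1 : Multiplicative (ZMod p)).toAdd).val] ↑a = ↑a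
        rw [toAdd_one, ZMod.val_zero, Function.iterate_zero_apply]
      mul_smul := fun x y a => by
        apply Subtype.ext
        show (shiftFun p)^[((x * y).toAdd).val] (↑a)
          = (shiftFun p)^[x.toAdd.val] ((shiftFun p)^[y.toAdd.val] ↑a)
        rw [← Function.iterate_add_apply, toAdd_mul, ZMod.val_add]
        exact (shiftFun_iterate_mod p hp.pos _ _).symm }
  have hPG : IsPGroup p (Multiplicative (ZMod p)) := by
    apply IsPGroup.of_card (n := 1)
    rw [Nat.card_congr (Multiplicative.toAdd (α := ZMod p)), Nat.card_zmod, pow_one]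
  have hmod := hPG.card_modEq_card_fixedPoints ↥B
  have hfpset : MulAction.fixedPoints (Multiplicative (ZMod p)) ↥B = {1} := by
    apply Set.eq_singleton_iff_unique_mem.mpr
    constructor
    · intro g
      apply Subtype.ext
      show (shiftFun p)^[g.toAdd.val] (↑(1 : ↥B)) = ↑(1 : ↥B)
      exact Function.iterate_fixed rfl _
    · intro x hx
      have h1 := hx (Multiplicative.ofAdd (1 : ZMod p))
      have hval : ((Multiplicative.ofAdd (1 : ZMod p)).toAdd).val = 1 := by
        haveI : Fact (1 < p) := ⟨hp.one_lt⟩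
        simp [ZMod.val_one]
      have h2 : (shiftFun p)^[((Multiplicative.ofAdd (1 : ZMod p)).toAdd).val] (x : Fin p → ℂˣ)
          = ↑x := congrArg Subtype.val h1
      rw [hval, Function.iterate_one] at h2
      by_contra hx1
      exact hcon ↑x x.2 (fun h => hx1 (Subtype.ext h)) h2
  rw [hfpset, Nat.card_coe_set_eq, Set.ncard_singleton] at hmod
  have hBpg : IsPGroup p ↥B := by
    intro g
    obtain ⟨K, hK⟩ := exists_exponent p (hX g.2)
    refine ⟨K, Subtype.ext ?_⟩
    show (g : Fin p → ℂˣ) ^ p ^ K = 1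
    funext i
    exact hK i
  obtain ⟨m, hm⟩ := hBpg.exists_card_eq
  have hm0 : m ≠ 0 := by
    rintro rfl
    rw [pow_zero] at hm
    exact hne (((Subgroup.card_le_one_iff_eq_bot B).mp (le_of_eq hm)))
  have hdvd : p ∣ Nat.card ↥B := hm ▸ dvd_pow_self p hm0
  obtain ⟨c, hc⟩ := hdvd
  have hmod' : (p * c) % p = 1 % p := hc ▸ hmod
  rw [Nat.mul_mod_right, Nat.mod_eq_of_lt hp.one_lt] at hmod'
  exact absurd hmod' (by omega)

end PPowAux
namespace PPowAux

variable (p : ℕ)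

lemma map_Dm_le_self (B : Subgroup (Fin p → ℂˣ)) (hs : ShiftInvariant p B) :
    B.map (Dm p) ≤ B := by
  intro x hx
  obtain ⟨a, ha, rfl⟩ := Subgroup.mem_map.mp hx
  exact B.mul_mem (hs a ha) (B.inv_mem ha)

lemma map_Dm_le_XP (B : Subgroup (Fin p → ℂˣ)) (hX : B ≤ XP p) :
    B.map (Dm p) ≤ XP p := by
  intro x hx
  obtain ⟨a, ha, rfl⟩ := Subgroup.mem_map.mp hx
  exact Dm_mem_XP p (hX ha)

lemma shiftInvariant_map_Dm (B : Subgroup (Fin p → ℂˣ)) (hs : ShiftInvariant p B) :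
    ShiftInvariant p (B.map (Dm p)) := by
  intro x hx
  obtain ⟨a, ha, rfl⟩ := Subgroup.mem_map.mp hx
  exact Subgroup.mem_map.mpr ⟨shiftFun p a, hs a ha, Dm_shift p a⟩

lemma finite_map_Dm (B : Subgroup (Fin p → ℂˣ)) (hfin : (B : Set (Fin p → ℂˣ)).Finite) :
    ((B.map (Dm p)) : Set (Fin p → ℂˣ)).Finite := by
  rw [Subgroup.coe_map]
  exact hfin.image _

lemma exists_killed (hp : p.Prime) (B₀ : Subgroup (Fin p → ℂˣ)) (hX₀ : B₀ ≤ XP p)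
    (hs₀ : ShiftInvariant p B₀) (hfin₀ : (B₀ : Set (Fin p → ℂˣ)).Finite) :
    ∃ k, B₀ ≤ Bsub p k := by
  suffices H : ∀ N (B : Subgroup (Fin p → ℂˣ)), Nat.card ↥B = N → B ≤ XP p →
      ShiftInvariant p B → (B : Set (Fin p → ℂˣ)).Finite → ∃ k, B ≤ Bsub p k from
    H _ B₀ rfl hX₀ hs₀ hfin₀
  intro N
  induction N using Nat.strong_induction_on with
  | _ N ih =>
    intro B hN hX hs hfin
    haveI : Finite ↥B := hfin.to_subtype
    by_cases hEq : B.map (Dm p) = B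
    · refine ⟨0, ?_⟩
      rw [Bsub_zero p]
      by_contra hbot
      have hne : B ≠ ⊥ := fun h => hbot (le_of_eq h)
      obtain ⟨a, haB, ha1, hfix⟩ := exists_fixed_ne_one p hp B hX hs ‹Finite ↥B› hne
      have hDa : Dm p a = 1 := by rw [Dm_apply, hfix, mul_inv_cancel]
      let f : ↥B →* ↥B :=
        { toFun := fun x => ⟨Dm p ↑x, map_Dm_le_self p B hs (Subgroup.mem_map.mpr ⟨↑x, x.2, rfl⟩)⟩
          map_one' := by ext; simp
          map_mul' := fun x y => by ext; simp }
      have hfsurj : Function.Surjective f := by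
        rintro ⟨y, hy⟩
        rw [← hEq] at hy
        obtain ⟨a', ha', rfl⟩ := Subgroup.mem_map.mp hy
        exact ⟨⟨a', ha'⟩, rfl⟩
      have hfinj : Function.Injective f := Finite.injective_iff_surjective.mpr hfsurj
      have : f ⟨a, haB⟩ = f 1 := by
        rw [map_one]
        exact Subtype.ext hDa
      exact ha1 (congrArg Subtype.val (hfinj this))
    · have hlt : B.map (Dm p) < B := lt_of_le_of_ne (map_Dm_le_self p B hs) hEq
      have hcard : Nat.card ↥(B.map (Dm p)) < N := by
        rw [← hN]
        have h1 : Nat.card ↥(B.map (Dm p)) = ((B.map (Dm p) : Set (Fin p → ℂˣ))).ncard :=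
          Nat.card_coe_set_eq _
        have h2 : Nat.card ↥B = ((B : Set (Fin p → ℂˣ))).ncard := Nat.card_coe_set_eq _
        rw [h1, h2]
        exact Set.ncard_lt_ncard (SetLike.coe_ssubset_coe.mpr hlt) hfin
      obtain ⟨k, hk⟩ := ih _ hcard (B.map (Dm p)) rfl (map_Dm_le_XP p B hX)
        (shiftInvariant_map_Dm p B hs) (finite_map_Dm p B hfin)
      refine ⟨k + 1, fun a ha => ⟨hX ha, ?_⟩⟩
      rw [Function.iterate_succ_apply]
      exact (hk (Subgroup.mem_map.mpr ⟨a, ha, rfl⟩)).2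

lemma eq_Bsub_of_le (hp : p.Prime) :
    ∀ n (B : Subgroup (Fin p → ℂˣ)), B ≤ XP p → ShiftInvariant p B →
      (B : Set (Fin p → ℂˣ)).Finite → B ≤ Bsub p n → ∃ m, B = Bsub p m := by
  intro n
  induction n with
  | zero =>
    intro B _ _ _ hle
    rw [Bsub_zero p] at hle
    exact ⟨0, by rw [Bsub_zero p]; exact le_bot_iff.mp hle⟩
  | succ n ih =>
    intro B hX hs hfin hle
    haveI : Finite ↥B := hfin.to_subtype
    haveI := finite_Bsub p hp
    have hB'le : B.map (Dm p) ≤ Bsub p n := by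
      rintro x hx
      obtain ⟨a, ha, rfl⟩ := Subgroup.mem_map.mp hx
      exact ⟨Dm_mem_XP p (hX ha), by
        rw [← Function.iterate_succ_apply]
        exact (hle ha).2⟩
    obtain ⟨m, hm⟩ := ih (B.map (Dm p)) (map_Dm_le_XP p B hX) (shiftInvariant_map_Dm p B hs)
      (finite_map_Dm p B hfin) hB'le
    by_cases hbot : B = ⊥
    · exact ⟨0, by rw [hbot, Bsub_zero p]⟩
    · obtain ⟨a, haB, ha1⟩ : ∃ a ∈ B, a ≠ (1 : Fin p → ℂˣ) := by
        rcases B.bot_or_exists_ne_one with h | h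
        · exact absurd h hbot
        · exact h
      have hex : ∃ r, (⇑(Dm p))^[r] a = 1 := ⟨n + 1, (hle haB).2⟩
      have hrpos : Nat.find hex ≠ 0 := by
        intro h
        have := Nat.find_spec hex
        rw [h, Function.iterate_zero_apply] at this
        exact ha1 this
      have hbB : (⇑(Dm p))^[Nat.find hex - 1] a ∈ B := Dm_iter_mem p B hs haB _
      have hb1 : (⇑(Dm p))^[Nat.find hex - 1] a ≠ 1 :=
        Nat.find_min hex (by omega)
      have hbD : Dm p ((⇑(Dm p))^[Nat.find hex - 1] a) = 1 := by
        have hsub : Nat.find hex - 1 + 1 = Nat.find hex := by omega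
        calc Dm p ((⇑(Dm p))^[Nat.find hex - 1] a)
            = (⇑(Dm p))^[Nat.find hex - 1 + 1] a := (Function.iterate_succ_apply' _ _ _).symm
          _ = 1 := by rw [hsub]; exact Nat.find_spec hex
      set b := (⇑(Dm p))^[Nat.find hex - 1] a with hbdef
      have hbB1 : b ∈ Bsub p 1 := ⟨hX hbB, by rw [Function.iterate_one]; exact hbD⟩
      have hzle : Subgroup.zpowers b ≤ Bsub p 1 := Subgroup.zpowers_le.mpr hbB1
      have hdvd : Nat.card (Subgroup.zpowers b) ∣ p := by
        have h := Subgroup.card_dvd_of_le hzle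
        rwa [card_Bsub_one p hp] at h
      have hord : Nat.card (Subgroup.zpowers b) = p := by
        rcases hp.eq_one_or_self_of_dvd _ hdvd with h1 | h
        · exfalso
          rw [Nat.card_zpowers, orderOf_eq_one_iff] at h1
          exact hb1 h1
        · exact h
      have hB1le : Bsub p 1 ≤ B := by
        have hzeq : Subgroup.zpowers b = Bsub p 1 :=
          Subgroup.eq_of_le_of_card_ge hzle (by rw [hord, card_Bsub_one p hp])
        rw [← hzeq]
        exact Subgroup.zpowers_le.mpr hbB
      let f : ↥B →* ↥(B.map (Dm p)) :=
        { toFun := fun x => ⟨Dm p ↑x, Subgroup.mem_map.mpr ⟨↑x, x.2, rfl⟩⟩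
          map_one' := by ext; simp
          map_mul' := fun x y => by ext; simp }
      have hfsurj : Function.Surjective f := by
        rintro ⟨y, hy⟩
        obtain ⟨a', ha', rfl⟩ := Subgroup.mem_map.mp hy
        exact ⟨⟨a', ha'⟩, rfl⟩
      have hker : f.ker = (Bsub p 1).subgroupOf B := by
        ext x
        simp only [MonoidHom.mem_ker, Subgroup.mem_subgroupOf]
        constructor
        · intro h
          exact ⟨hX x.2, by rw [Function.iterate_one]; exact congrArg Subtype.val h⟩
        · intro h
          refine Subtype.ext ?_
          have := h.2
          rwa [Function.iterate_one] at this
      have hcardB : Nat.card ↥B = p ^ (m + 1) := by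
        have h1 := Subgroup.card_eq_card_quotient_mul_card_subgroup f.ker
        have h2 : Nat.card (↥B ⧸ f.ker) = Nat.card ↥(B.map (Dm p)) :=
          Nat.card_congr (QuotientGroup.quotientKerEquivOfSurjective f hfsurj).toEquiv
        have h3 : Nat.card f.ker = p := by
          rw [hker, Nat.card_congr (Subgroup.subgroupOfEquivOfLe hB1le).toEquiv,
            card_Bsub_one p hp]
        rw [h1, h2, h3, hm, card_Bsub p hp, pow_succ]
      have hleB : B ≤ Bsub p (m + 1) := by
        intro a' ha'
        refine ⟨hX ha', ?_⟩
        rw [Function.iterate_succ_apply]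
        have hmem : Dm p a' ∈ B.map (Dm p) := Subgroup.mem_map.mpr ⟨a', ha', rfl⟩
        rw [hm] at hmem
        exact hmem.2
      exact ⟨m + 1, Subgroup.eq_of_le_of_card_ge hleB
        (by rw [hcardB, card_Bsub p hp])⟩

end PPowAux

theorem pPower_norm_one_tuples_uniserial (p : ℕ) (hp : p.Prime) :
    (∀ j : ℕ, ∃! B : Subgroup (Fin p → ℂˣ),
      ((∀ a ∈ B, MemXGroup p a) ∧ ShiftInvariant p B) ∧ Nat.card B = p ^ j) ∧
    (∀ B : Subgroup (Fin p → ℂˣ), (∀ a ∈ B, MemXGroup p a) → ShiftInvariant p B →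
      (B : Set (Fin p → ℂˣ)).Finite → ∃ j : ℕ, Nat.card B = p ^ j) ∧
    (∀ B C : Subgroup (Fin p → ℂˣ),
      (∀ a ∈ B, MemXGroup p a) → ShiftInvariant p B → (B : Set (Fin p → ℂˣ)).Finite →
      (∀ a ∈ C, MemXGroup p a) → ShiftInvariant p C → (C : Set (Fin p → ℂˣ)).Finite →
      B ≤ C ∨ C ≤ B) := by
  have classify : ∀ B : Subgroup (Fin p → ℂˣ), (∀ a ∈ B, MemXGroup p a) →
      ShiftInvariant p B → (B : Set (Fin p → ℂˣ)).Finite → ∃ m, B = PPowAux.Bsub p m := by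
    intro B hmem hs hfin
    have hX : B ≤ PPowAux.XP p := fun a ha => hmem a ha
    obtain ⟨k, hk⟩ := PPowAux.exists_killed p hp B hX hs hfin
    exact PPowAux.eq_Bsub_of_le p hp k B hX hs hfin hk
  refine ⟨?_, ?_, ?_⟩
  · intro j
    refine ⟨PPowAux.Bsub p j, ⟨⟨fun a ha => ha.1, PPowAux.shiftInvariant_Bsub p j⟩,
      PPowAux.card_Bsub p hp j⟩, ?_⟩
    rintro B ⟨⟨hmem, hs⟩, hcard⟩
    have hfinB : Finite ↥B := Nat.finite_of_card_ne_zero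
      (by rw [hcard]; exact pow_ne_zero j hp.ne_zero)
    have hfin : (B : Set (Fin p → ℂˣ)).Finite := Set.finite_coe_iff.mp hfinB
    obtain ⟨m, hm⟩ := classify B hmem hs hfin
    have hpm : p ^ m = p ^ j := by rw [← PPowAux.card_Bsub p hp m, ← hm, hcard]
    have hmj : m = j := Nat.pow_right_injective hp.two_le hpm
    rw [hm, hmj]
  · intro B hmem hs hfin
    obtain ⟨m, hm⟩ := classify B hmem hs hfin
    exact ⟨m, by rw [hm, PPowAux.card_Bsub p hp m]⟩
  · intro B C hBm hBs hBf hCm hCs hCf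
    obtain ⟨m, hm⟩ := classify B hBm hBs hBf
    obtain ⟨m', hm'⟩ := classify C hCm hCs hCf
    rcases le_total m m' with h | h
    · exact Or.inl (by rw [hm, hm']; exact PPowAux.Bsub_mono p h)
    · exact Or.inr (by rw [hm, hm']; exact PPowAux.Bsub_mono p h)
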